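/- Let ℓ < i be real numbers, let ρ : [ℓ, i] → (0,∞) be continuous, set β(y) = ∫_ℓ^y √(ρ(v)) dv, and let H : [ℓ, i] → (0,∞) be continuously differentiable with H' > 0. If H'(z) / ( H(z) e^{H(z)} ) = D √(ρ(z)) for all z ∈ [ℓ, i], for some constant D > 0, then D = ( φ(H(ℓ)) − φ(H(i)) ) / β(i) and ∫_ℓ^i ρ(z) H(z) e^{H(z)} / H'(z) dz = β(i)² / ( φ(H(ℓ)) − φ(H(i)) ); that is, the Cauchy–Schwarz lower bound is attained. -/

import Mathlib

open MeasureTheory Set intervalIntegral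

set_option maxHeartbeats 1000000

lemma aux_int {a : ℝ} (ha : 0 < a) :
    IntegrableOn (fun u : ℝ => 1 / (u * Real.exp u)) (Set.Ioi a) := by
  have hmaj := (exp_neg_integrableOn_Ioi a (b := 1) one_pos).const_mul (1/a)
  refine hmaj.mono' ?_ ?_
  · refine (ContinuousOn.aestronglyMeasurable ?_ measurableSet_Ioi)
    refine ContinuousOn.div continuousOn_const
      ((continuousOn_id).mul (Real.continuous_exp.continuousOn)) ?_
    intro u hu
    have : 0 < u := ha.trans hu
    positivity
  · filter_upwards [ae_restrict_mem measurableSet_Ioi] with u hu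
    have hua : a < u := hu
    have hu0 : 0 < u := ha.trans hua
    rw [Real.norm_eq_abs, abs_of_nonneg (by positivity)]
    rw [neg_one_mul, Real.exp_neg, one_div, mul_inv, one_div]
    exact mul_le_mul_of_nonneg_right (inv_anti₀ ha hua.le) (by positivity)

theorem stmt_14
    (φ : ℝ → ℝ) (hφ : ∀ x : ℝ, φ x = ∫ u in Set.Ioi x, 1 / (u * Real.exp u))
    (ℓ i : ℝ) (hℓi : ℓ < i) (ρ H H' : ℝ → ℝ) (D : ℝ) (hD : 0 < D)
    (hρc : ContinuousOn ρ (Set.Icc ℓ i))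
    (hρpos : ∀ z ∈ Set.Icc ℓ i, 0 < ρ z)
    (hH : ∀ z ∈ Set.Icc ℓ i, HasDerivWithinAt H (H' z) (Set.Icc ℓ i) z)
    (hH'c : ContinuousOn H' (Set.Icc ℓ i))
    (hHpos : ∀ z ∈ Set.Icc ℓ i, 0 < H z)
    (hH'pos : ∀ z ∈ Set.Icc ℓ i, 0 < H' z)
    (hEL : ∀ z ∈ Set.Icc ℓ i,
      H' z / (H z * Real.exp (H z)) = D * Real.sqrt (ρ z)) :
    D = (φ (H ℓ) - φ (H i)) / (∫ v in ℓ..i, Real.sqrt (ρ v)) ∧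
    ∫ z in ℓ..i, ρ z * H z * Real.exp (H z) / H' z =
      (∫ v in ℓ..i, Real.sqrt (ρ v)) ^ 2 / (φ (H ℓ) - φ (H i)) := by
  have hℓm : ℓ ∈ Set.Icc ℓ i := Set.left_mem_Icc.2 hℓi.le
  have him : i ∈ Set.Icc ℓ i := Set.right_mem_Icc.2 hℓi.le
  have hIcc : Set.uIcc ℓ i = Set.Icc ℓ i := Set.uIcc_of_le hℓi.le
  set β := ∫ v in ℓ..i, Real.sqrt (ρ v) with hβ
  have hsqc : ContinuousOn (fun v => Real.sqrt (ρ v)) (Set.Icc ℓ i) :=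
    Real.continuous_sqrt.comp_continuousOn hρc
  have hβpos : 0 < β := by
    refine intervalIntegral.intervalIntegral_pos_of_pos_on ?_ ?_ hℓi
    · exact (hsqc.mono (hIcc ▸ Set.Subset.rfl)).intervalIntegrable
    · intro x hx
      exact Real.sqrt_pos.2 (hρpos x ⟨hx.1.le, hx.2.le⟩)
  -- continuity of H
  have hHc : ContinuousOn H (Set.Icc ℓ i) := fun z hz => (hH z hz).continuousWithinAt
  -- H ℓ < H i
  have hmono : StrictMonoOn H (Set.Icc ℓ i) := by
    refine strictMonoOn_of_hasDerivWithinAt_pos (f' := H') (convex_Icc ℓ i) hHc ?_ ?_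
    · intro x hx
      rw [interior_Icc] at hx ⊢
      exact (hH x ⟨hx.1.le, hx.2.le⟩).mono Set.Ioo_subset_Icc_self
    · intro x hx
      rw [interior_Icc] at hx
      exact hH'pos x ⟨hx.1.le, hx.2.le⟩
  have hHlt : H ℓ < H i := hmono hℓm him hℓi
  have hHℓpos : 0 < H ℓ := hHpos ℓ hℓm
  have hHipos : 0 < H i := hHpos i him
  -- φ difference
  have hφdiff : φ (H ℓ) - φ (H i) = ∫ u in Set.Ioc (H ℓ) (H i), 1 / (u * Real.exp u) := by
    have hsplit : Set.Ioc (H ℓ) (H i) ∪ Set.Ioi (H i) = Set.Ioi (H ℓ) :=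
      Set.Ioc_union_Ioi_eq_Ioi hHlt.le
    have h1 : IntegrableOn (fun u : ℝ => 1 / (u * Real.exp u)) (Set.Ioc (H ℓ) (H i)) :=
      (aux_int hHℓpos).mono_set Set.Ioc_subset_Ioi_self
    have h2 : IntegrableOn (fun u : ℝ => 1 / (u * Real.exp u)) (Set.Ioi (H i)) :=
      aux_int hHipos
    have := MeasureTheory.setIntegral_union (Set.Ioc_disjoint_Ioi le_rfl)
      measurableSet_Ioi h1 h2 (f := fun u : ℝ => 1 / (u * Real.exp u)) (μ := volume)
    rw [hsplit] at this
    rw [hφ, hφ, this]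
    ring
  -- substitution
  have hgc : ContinuousOn (fun u : ℝ => 1 / (u * Real.exp u)) (H '' Set.uIcc ℓ i) := by
    refine ContinuousOn.div continuousOn_const
      ((continuousOn_id).mul Real.continuous_exp.continuousOn) ?_
    rintro u ⟨z, hz, rfl⟩
    rw [hIcc] at hz
    have := hHpos z hz
    positivity
  have hsub : (∫ x in ℓ..i, H' x • ((fun u : ℝ => 1 / (u * Real.exp u)) ∘ H) x) =
      ∫ u in (H ℓ)..(H i), 1 / (u * Real.exp u) := by
    refine intervalIntegral.integral_comp_smul_deriv'' (hIcc ▸ hHc) ?_ (hIcc ▸ hH'c) hgc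
    intro x hx
    rw [min_eq_left hℓi.le, max_eq_right hℓi.le] at hx
    exact (hH x ⟨hx.1.le, hx.2.le⟩).mono_of_mem_nhdsWithin
      (Icc_mem_nhdsGT_of_mem ⟨hx.1.le, hx.2⟩)
  have hkey : D * β = φ (H ℓ) - φ (H i) := by
    rw [hφdiff, ← intervalIntegral.integral_of_le hHlt.le, ← hsub]
    rw [hβ, ← intervalIntegral.integral_const_mul]
    refine intervalIntegral.integral_congr ?_
    intro z hz
    rw [hIcc] at hz
    have h1 := hEL z hz
    simp only [smul_eq_mul, Function.comp_apply]
    rw [mul_one_div, h1]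
  have hD1 : D = (φ (H ℓ) - φ (H i)) / β := by
    rw [← hkey]
    field_simp
  refine ⟨hD1, ?_⟩
  have hint2 : (∫ z in ℓ..i, ρ z * H z * Real.exp (H z) / H' z) = β / D := by
    rw [hβ, ← intervalIntegral.integral_div]
    refine intervalIntegral.integral_congr ?_
    intro z hz
    rw [hIcc] at hz
    have h1 := hEL z hz
    have hρz := hρpos z hz
    have hHz := hHpos z hz
    have hH'z := hH'pos z hz
    have hs : Real.sqrt (ρ z) > 0 := Real.sqrt_pos.2 hρz
    have hden : H z * Real.exp (H z) > 0 := by positivity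
    have hH'eq : H' z = D * Real.sqrt (ρ z) * (H z * Real.exp (H z)) := by
      field_simp at h1
      linarith [h1]
    have hρeq : ρ z = Real.sqrt (ρ z) * Real.sqrt (ρ z) := (Real.mul_self_sqrt hρz.le).symm
    show ρ z * H z * Real.exp (H z) / H' z = Real.sqrt (ρ z) / D
    rw [hH'eq, div_eq_div_iff (by positivity) (ne_of_gt hD)]
    linear_combination (-(H z * Real.exp (H z) * D)) * (Real.mul_self_sqrt hρz.le)
  rw [hint2, ← hkey]
  rw [sq]
  field_simp
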